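/- Let k ≥ 2 and t ≥ 0 be integers, and let G = K_{2+2t} ∨ ((1+t)(2k+1) + 1)·K_1, the join of a complete graph on 2+2t vertices with (1+t)(2k+1)+1 isolated vertices. Then: (i) the minimum degree of G equals 2+2t; (ii) the independence number of G equals (1+t)(2k+1)+1, so that (2k+1)·δ(G) = 2·(α(G) − 1); and (iii) there exists a subset S ⊆ V(G) (namely S = V(K_{2+2t}), with |S| = 2+2t) such that 2·i(G−S) > (2k+1)·|S|. -/

import Mathlib

/-- The number of isolated vertices of the induced subgraph `G − S`:
vertices outside `S` having no neighbor outside `S`. -/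
def isoCount {V : Type*} [Fintype V] [DecidableEq V] (G : SimpleGraph V)
    [DecidableRel G.Adj] (S : Finset V) : ℕ :=
  (Finset.univ.filter (fun v => v ∉ S ∧ ∀ w, w ∉ S → ¬ G.Adj v w)).card

/-- The independence number of `G`: the maximum size of a set of pairwise
nonadjacent vertices. -/
def indepNum {V : Type*} [Fintype V] [DecidableEq V] (G : SimpleGraph V)
    [DecidableRel G.Adj] : ℕ :=
  (Finset.univ.filter
    (fun A : Finset V => ∀ x ∈ A, ∀ y ∈ A, x ≠ y → ¬ G.Adj x y)).sup Finset.card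

/-- Rank of a vertex of `K_t ∨ (K_a ∪ b·K_1)`: `0` on `K_t`, `1` on `K_a`, `2` on the
isolated part. -/
def rnk {t a b : ℕ} : Fin t ⊕ (Fin a ⊕ Fin b) → ℕ
  | Sum.inl _ => 0
  | Sum.inr (Sum.inl _) => 1
  | Sum.inr (Sum.inr _) => 2

/-- The join `K_t ∨ (K_a ∪ b·K_1)`: every vertex of `K_t` is adjacent to all other
vertices, and the vertices of `K_a` are moreover pairwise adjacent.
(`K_t ∨ b·K_1` is the case `a = 0`.) -/
def joinGraph (t a b : ℕ) : SimpleGraph (Fin t ⊕ (Fin a ⊕ Fin b)) where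
  Adj u v := u ≠ v ∧ (rnk u = 0 ∨ rnk v = 0 ∨ (rnk u = 1 ∧ rnk v = 1))
  symm := ⟨by rintro u v ⟨h1, h2⟩; exact ⟨h1.symm, by tauto⟩⟩
  loopless := ⟨by rintro u ⟨h, -⟩; exact h rfl⟩

instance (t a b : ℕ) : DecidableRel (joinGraph t a b).Adj := fun u v =>
  decidable_of_iff (u ≠ v ∧ (rnk u = 0 ∨ rnk v = 0 ∨ (rnk u = 1 ∧ rnk v = 1))) Iff.rfl

lemma nbhd_inl (m n : ℕ) (i : Fin m) :
    (joinGraph m 0 n).neighborFinset (Sum.inl i) = Finset.univ.erase (Sum.inl i) := by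
  ext w
  simp only [SimpleGraph.mem_neighborFinset, Finset.mem_erase, Finset.mem_univ, and_true]
  constructor
  · rintro ⟨h, -⟩; exact h.symm
  · intro h; exact ⟨h.symm, Or.inl rfl⟩

lemma nbhd_inr (m n : ℕ) (j : Fin n) :
    (joinGraph m 0 n).neighborFinset (Sum.inr (Sum.inr j) : Fin m ⊕ (Fin 0 ⊕ Fin n)) =
      Finset.univ.map ⟨Sum.inl, Sum.inl_injective⟩ := by
  ext w
  rcases w with i | x | jj
  · simp only [SimpleGraph.mem_neighborFinset, Finset.mem_map, Finset.mem_univ]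
    constructor
    · intro _; exact ⟨i, by simp, rfl⟩
    · intro _; exact ⟨by simp, Or.inr (Or.inl rfl)⟩
  · exact x.elim0
  · simp only [SimpleGraph.mem_neighborFinset, Finset.mem_map, Finset.mem_univ]
    constructor
    · rintro ⟨-, h | h | ⟨h, -⟩⟩ <;> simp [rnk] at h
    · rintro ⟨a, -, h⟩; exact absurd h (by simp)

lemma deg_inl (m n : ℕ) (i : Fin m) :
    (joinGraph m 0 n).degree (Sum.inl i) = m + n - 1 := by
  rw [SimpleGraph.degree, nbhd_inl, Finset.card_erase_of_mem (Finset.mem_univ _),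
    Finset.card_univ]
  simp

lemma deg_inr (m n : ℕ) (j : Fin n) :
    (joinGraph m 0 n).degree (Sum.inr (Sum.inr j) : Fin m ⊕ (Fin 0 ⊕ Fin n)) = m := by
  rw [SimpleGraph.degree, nbhd_inr]
  simp

def rightSet (m n : ℕ) : Finset (Fin m ⊕ (Fin 0 ⊕ Fin n)) :=
  Finset.univ.map ⟨fun j => Sum.inr (Sum.inr j),
    fun a b h => by simpa using h⟩

lemma rightSet_card (m n : ℕ) : (rightSet m n).card = n := by
  simp [rightSet]

lemma mem_rightSet (m n : ℕ) (v : Fin m ⊕ (Fin 0 ⊕ Fin n)) :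
    v ∈ rightSet m n ↔ ∃ j, v = Sum.inr (Sum.inr j) := by
  simp [rightSet, eq_comm]
  exact Iff.rfl

lemma indep_num_eq (m n : ℕ) (hn : 1 ≤ n) : indepNum (joinGraph m 0 n) = n := by
  unfold indepNum
  apply le_antisymm
  · apply Finset.sup_le
    intro A hA
    simp only [Finset.mem_filter] at hA
    by_cases hl : ∃ i : Fin m, Sum.inl i ∈ A
    · obtain ⟨i, hi⟩ := hl
      have : A ⊆ {Sum.inl i} := by
        intro y hy
        rw [Finset.mem_singleton]
        by_contra hy'
        exact hA.2 _ hi _ hy (fun h => hy' h.symm) ⟨fun h => hy' h.symm, Or.inl rfl⟩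
      calc A.card ≤ 1 := by simpa using Finset.card_le_card this
        _ ≤ n := hn
    · have : A ⊆ rightSet m n := by
        intro x hx
        rcases x with i | x | j
        · exact absurd ⟨i, hx⟩ hl
        · exact x.elim0
        · rw [mem_rightSet]; exact ⟨j, rfl⟩
      calc A.card ≤ (rightSet m n).card := Finset.card_le_card this
        _ = n := rightSet_card m n
  · have hmem : rightSet m n ∈ Finset.univ.filter
        (fun A : Finset (Fin m ⊕ (Fin 0 ⊕ Fin n)) =>
          ∀ x ∈ A, ∀ y ∈ A, x ≠ y → ¬ (joinGraph m 0 n).Adj x y) := by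
      simp only [Finset.mem_filter, Finset.mem_univ, true_and]
      intro x hx y hy hne hadj
      rw [mem_rightSet] at hx hy
      obtain ⟨a, rfl⟩ := hx
      obtain ⟨b, rfl⟩ := hy
      rcases hadj.2 with h | h | ⟨h, -⟩ <;> simp [rnk] at h
    have := Finset.le_sup (f := Finset.card) hmem
    rwa [rightSet_card] at this

def leftSet (m n : ℕ) : Finset (Fin m ⊕ (Fin 0 ⊕ Fin n)) :=
  Finset.univ.map ⟨Sum.inl, Sum.inl_injective⟩

lemma mem_leftSet (m n : ℕ) (v : Fin m ⊕ (Fin 0 ⊕ Fin n)) :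
    v ∈ leftSet m n ↔ ∃ i, v = Sum.inl i := by
  simp [leftSet, eq_comm]

lemma isoCount_eq (m n : ℕ) : isoCount (joinGraph m 0 n) (leftSet m n) = n := by
  unfold isoCount
  have : Finset.univ.filter
      (fun v => v ∉ leftSet m n ∧ ∀ w, w ∉ leftSet m n → ¬ (joinGraph m 0 n).Adj v w)
      = rightSet m n := by
    ext v
    simp only [Finset.mem_filter, Finset.mem_univ, true_and, mem_rightSet]
    constructor
    · rintro ⟨hv, -⟩
      rcases v with i | x | j
      · exact absurd ((mem_leftSet m n _).2 ⟨i, rfl⟩) hv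
      · exact x.elim0
      · exact ⟨j, rfl⟩
    · rintro ⟨j, rfl⟩
      refine ⟨by simp [mem_leftSet], fun w hw hadj => ?_⟩
      rcases w with i | x | jj
      · exact hw ((mem_leftSet m n _).2 ⟨i, rfl⟩)
      · exact x.elim0
      · rcases hadj.2 with h | h | ⟨h, -⟩ <;> simp [rnk] at h
  rw [this, rightSet_card]

/-- **Remark 5.1.** For integers `k ≥ 2` and `t ≥ 0`, the graph
`G = K_{2+2t} ∨ ((1+t)(2k+1)+1)·K_1` satisfies: (i) its minimum degree equals `2+2t`;
(ii) its independence number equals `(1+t)(2k+1)+1`; and (iii) there is a vertex subset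
`S` with `|S| = 2+2t` (namely `V(K_{2+2t})`) such that `2·i(G−S) > (2k+1)·|S|`. -/
theorem stmt16 (k t : ℕ) (hk : 2 ≤ k) :
    ((∀ v, 2 + 2 * t ≤ (joinGraph (2 + 2 * t) 0 ((1 + t) * (2 * k + 1) + 1)).degree v)
      ∧ (∃ v, (joinGraph (2 + 2 * t) 0 ((1 + t) * (2 * k + 1) + 1)).degree v = 2 + 2 * t))
    ∧ indepNum (joinGraph (2 + 2 * t) 0 ((1 + t) * (2 * k + 1) + 1))
        = (1 + t) * (2 * k + 1) + 1
    ∧ ∃ S : Finset (Fin (2 + 2 * t) ⊕ (Fin 0 ⊕ Fin ((1 + t) * (2 * k + 1) + 1))),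
        S.card = 2 + 2 * t ∧
        (2 * k + 1) * S.card
          < 2 * isoCount (joinGraph (2 + 2 * t) 0 ((1 + t) * (2 * k + 1) + 1)) S := by
  set m := 2 + 2 * t with hm
  set n := (1 + t) * (2 * k + 1) + 1 with hn
  refine ⟨⟨?_, ?_⟩, ?_, ?_⟩
  · intro v
    rcases v with i | x | j
    · rw [deg_inl]; omega
    · exact x.elim0
    · rw [deg_inr]
  · exact ⟨Sum.inr (Sum.inr ⟨0, by omega⟩), deg_inr m n _⟩
  · exact indep_num_eq m n (by omega)
  · refine ⟨leftSet m n, by simp [leftSet], ?_⟩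
    rw [isoCount_eq]
    have h1 : (leftSet m n).card = m := by simp [leftSet]
    rw [h1]
    have : 2 * n = (2 * k + 1) * m + 2 := by rw [hm, hn]; ring
    omega
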